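/- Let Δ be a countably infinite ordered homogeneous structure with countable relational signature. Then the age of Δ is a Ramsey class if and only if the automorphism group Aut(Δ), endowed with the topology of pointwise convergence, is extremely amenable. -/

import Mathlib

open FirstOrder FirstOrder.Language

namespace PaperDef

/-- The structure `M` is *ordered*: some binary relation symbol of the signature
denotes a linear order on the domain. -/
def Ordered (L : Language) (M : Type*) [L.Structure M] : Prop :=
  ∃ r : L.Relations 2, IsLinearOrder M (fun a b => Structure.RelMap r ![a, b])

/-- A class of structures is a *Ramsey class*. -/
def RamseyClass {L : Language} (K : Set (CategoryTheory.Bundled.{0} L.Structure)) : Prop :=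
  ∀ k : ℕ, 1 ≤ k → ∀ H ∈ K, ∀ P ∈ K, ∃ S ∈ K,
    ∀ χ : {Q : L.Substructure S // Nonempty (P ≃[L] Q)} → Fin k,
      ∃ e : H ↪[L] S,
        ∀ Q₁ Q₂ : {Q : L.Substructure S // Nonempty (P ≃[L] Q)},
          (Q₁.1 : Set S) ⊆ Set.range e → (Q₂.1 : Set S) ⊆ Set.range e → χ Q₁ = χ Q₂

/-- `M` is *finitely bounded*: membership of a finite(ly generated) structure in the age of `M`
is characterized by finitely many forbidden substructures. -/
def FinitelyBounded (L : Language) (M : Type) [L.Structure M] : Prop :=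
  ∃ (k : ℕ) (F : Fin k → CategoryTheory.Bundled.{0} L.Structure),
    (∀ i, Structure.FG L (F i)) ∧
    ∀ A : CategoryTheory.Bundled.{0} L.Structure, Structure.FG L A →
      (A ∈ L.age M ↔ ∀ i, ¬ Nonempty ((F i) ↪[L] A))

/-- The `L'`-structure on `M` is a *reduct* of the `L`-structure on `M`:
every relation of the former is first-order definable in the latter. -/
def IsReduct (L L' : Language) (M : Type*) [L.Structure M] [L'.Structure M] : Prop :=
  ∀ (n : ℕ) (r : L'.Relations n), ∃ φ : L.Formula (Fin n),
    ∀ x : Fin n → M, Structure.RelMap r x ↔ φ.Realize x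

/-- Two `n`-tuples have the same (complete first-order) type. -/
def SameType (L : Language) (M : Type*) [L.Structure M] {n : ℕ} (a b : Fin n → M) : Prop :=
  ∀ φ : L.Formula (Fin n), φ.Realize a ↔ φ.Realize b

/-- A function is *canonical*: it maps tuples of equal types to tuples of equal types. -/
def Canonical (L L' : Language) (X Ω : Type*) [L.Structure X] [L'.Structure Ω]
    (f : X → Ω) : Prop :=
  ∀ (n : ℕ) (a b : Fin n → X), SameType L X a b →
    SameType L' Ω (fun i => f (a i)) (fun i => f (b i))

/-- A function is *canonical on a set `F`*. -/
def CanonicalOn (L L' : Language) (X Ω : Type*) [L.Structure X] [L'.Structure Ω]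
    (F : Set X) (f : X → Ω) : Prop :=
  ∀ (n : ℕ) (a b : Fin n → X), (∀ i, a i ∈ F) → (∀ i, b i ∈ F) → SameType L X a b →
    SameType L' Ω (fun i => f (a i)) (fun i => f (b i))

/-- `M` is ω-categorical: every countable model of its complete theory is isomorphic to it. -/
def OmegaCategorical (L : Language) (M : Type) [L.Structure M] : Prop :=
  ∀ (N : Type) [L.Structure N], Countable N →
    (∀ φ : L.Sentence, φ ∈ L.completeTheory M → N ⊨ φ) → Nonempty (M ≃[L] N)

/-- Primitive positive formulas: built from atomic formulas using `∧` and `∃`. -/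
inductive IsPrimitivePositive {L : Language} {α : Type*} :
    ∀ {n : ℕ}, L.BoundedFormula α n → Prop
  | atomic {n : ℕ} {φ : L.BoundedFormula α n} (h : φ.IsAtomic) : IsPrimitivePositive φ
  | inf {n : ℕ} {φ ψ : L.BoundedFormula α n} :
      IsPrimitivePositive φ → IsPrimitivePositive ψ → IsPrimitivePositive (φ ⊓ ψ)
  | ex {n : ℕ} {φ : L.BoundedFormula α (n + 1)} :
      IsPrimitivePositive φ → IsPrimitivePositive φ.ex

/-- Existential formulas: existentially quantified quantifier-free formulas. -/
inductive IsExistential {L : Language} {α : Type*} :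
    ∀ {n : ℕ}, L.BoundedFormula α n → Prop
  | of_isQF {n : ℕ} {φ : L.BoundedFormula α n} (h : φ.IsQF) : IsExistential φ
  | ex {n : ℕ} {φ : L.BoundedFormula α (n + 1)} : IsExistential φ → IsExistential φ.ex

/-- Existential positive formulas: built from atomic formulas using `∧`, `∨` and `∃`. -/
inductive IsExistentialPositive {L : Language} {α : Type*} :
    ∀ {n : ℕ}, L.BoundedFormula α n → Prop
  | atomic {n : ℕ} {φ : L.BoundedFormula α n} (h : φ.IsAtomic) : IsExistentialPositive φ
  | inf {n : ℕ} {φ ψ : L.BoundedFormula α n} :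
      IsExistentialPositive φ → IsExistentialPositive ψ → IsExistentialPositive (φ ⊓ ψ)
  | sup {n : ℕ} {φ ψ : L.BoundedFormula α n} :
      IsExistentialPositive φ → IsExistentialPositive ψ → IsExistentialPositive (φ ⊔ ψ)
  | ex {n : ℕ} {φ : L.BoundedFormula α (n + 1)} :
      IsExistentialPositive φ → IsExistentialPositive φ.ex

/-- A `k`-ary operation *preserves* an `m`-ary relation. -/
def Preserves {D : Type*} {k m : ℕ} (f : (Fin k → D) → D) (R : (Fin m → D) → Prop) : Prop :=
  ∀ rows : Fin k → Fin m → D, (∀ j, R (rows j)) → R (fun i => f (fun j => rows j i))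

/-- A unary operation *preserves* an `m`-ary relation. -/
def Preserves1 {D : Type*} {m : ℕ} (f : D → D) (R : (Fin m → D) → Prop) : Prop :=
  ∀ a : Fin m → D, R a → R (fun i => f (a i))

/-- An endomorphism of the structure `M`. -/
def IsEndo (L : Language) (M : Type*) [L.Structure M] (f : M → M) : Prop :=
  ∀ (n : ℕ) (r : L.Relations n) (x : Fin n → M),
    Structure.RelMap r x → Structure.RelMap r (fun i => f (x i))

/-- A self-embedding of the structure `M`. -/
def IsSelfEmb (L : Language) (M : Type*) [L.Structure M] (f : M → M) : Prop :=
  Function.Injective f ∧ ∀ (n : ℕ) (r : L.Relations n) (x : Fin n → M),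
    (Structure.RelMap r (fun i => f (x i)) ↔ Structure.RelMap r x)

/-- A polymorphism of the structure `M`. -/
def IsPoly (L : Language) (M : Type*) [L.Structure M] {k : ℕ} (f : (Fin k → M) → M) : Prop :=
  ∀ (n : ℕ) (r : L.Relations n), Preserves f (fun x : Fin n → M => Structure.RelMap r x)

/-- The set of endomorphisms of `M`. -/
def EndSet (L : Language) (M : Type*) [L.Structure M] : Set (M → M) :=
  {f | IsEndo L M f}

/-- Two tuples lie in the same orbit of the automorphism group. -/
def SameOrbit (L : Language) (M : Type*) [L.Structure M] {n : ℕ} (a b : Fin n → M) : Prop :=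
  ∃ α : M ≃[L] M, ∀ i, α (a i) = b i

/-- The subsets `s` and `t` induce isomorphic substructures. -/
def SetIso (L : Language) (X : Type*) [L.Structure X] (s t : Set X) : Prop :=
  ∃ g : s ≃ t, ∀ (n : ℕ) (r : L.Relations n) (x : Fin n → s),
    (Structure.RelMap r (fun j => ((x j : X))) ↔ Structure.RelMap r (fun j => ((g (x j) : t) : X)))

/-- The `L[[Fin n]]`-structure on `M` obtained by naming the constants `c 0, …, c (n-1)`. -/
def withConstantsStruct (L : Language) {M : Type*} [L.Structure M] {n : ℕ} (c : Fin n → M) :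
    (L[[Fin n]]).Structure M :=
  letI := constantsOn.structure c
  inferInstance

/-- Two sequences of `n` tuples from a product `Ξ₁ × ⋯ × Ξₘ` have the same type:
componentwise, the corresponding `n`-tuples have the same type. -/
def SameSeqType {m : ℕ} (Ls : Fin m → Language) (Xs : Fin m → Type*)
    [∀ i, (Ls i).Structure (Xs i)] {n : ℕ} (a b : Fin n → ∀ i, Xs i) : Prop :=
  ∀ i, SameType (Ls i) (Xs i) (fun j => a j i) (fun j => b j i)

/-- A function defined on a product of structures is canonical. -/
def CanonicalProd {m : ℕ} (Ls : Fin m → Language) (Xs : Fin m → Type*)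
    [∀ i, (Ls i).Structure (Xs i)] (L' : Language) (Ω : Type*) [L'.Structure Ω]
    (f : (∀ i, Xs i) → Ω) : Prop :=
  ∀ (n : ℕ) (a b : Fin n → ∀ i, Xs i), SameSeqType Ls Xs a b →
    SameType L' Ω (fun j => f (a j)) (fun j => f (b j))

end PaperDef

namespace PaperDef

/-- The automorphism group of a first-order structure. -/
instance autGroup (L : Language) (M : Type*) [L.Structure M] : Group (M ≃[L] M) where
  mul g h := g.comp h
  one := Language.Equiv.refl L M
  inv := Language.Equiv.symm
  mul_assoc a b c := Language.Equiv.comp_assoc c b a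
  one_mul := Language.Equiv.refl_comp
  mul_one := Language.Equiv.comp_refl
  inv_mul_cancel := Language.Equiv.symm_comp_self

/-- The topology of pointwise convergence on the automorphism group of a structure
(the domain being discrete). -/
instance autTopology (L : Language) (M : Type*) [L.Structure M] :
    TopologicalSpace (M ≃[L] M) :=
  TopologicalSpace.induced (fun g => (g : M → M))
    (@Pi.topologicalSpace M (fun _ => M) (fun _ => ⊥))

/-- A topological group is extremely amenable if every continuous action on a nonempty
compact Hausdorff space has a fixed point. -/
def ExtremelyAmenable (G : Type*) [Group G] [TopologicalSpace G] : Prop :=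
  ∀ (X : Type) [TopologicalSpace X] [CompactSpace X] [T2Space X] [Nonempty X]
    [MulAction G X], Continuous (fun p : G × X => p.1 • p.2) →
      ∃ x : X, ∀ g : G, g • x = x

end PaperDef


namespace PaperDef

open Set Topology


variable {L : Language} {M : Type*} [L.Structure M]

@[simp] lemma aut_mul_apply (g h : M ≃[L] M) (x : M) : (g * h) x = g (h x) := rfl
@[simp] lemma aut_one_apply (x : M) : (1 : M ≃[L] M) x = x := rfl
@[simp] lemma aut_inv_apply (g : M ≃[L] M) (x : M) : g⁻¹ x = g.symm x := rfl

/-- neighborhoods of 1 in the automorphism group contain pointwise stabilizers -/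
lemma exists_finset_nhds_one {N : Set (M ≃[L] M)} (hN : N ∈ 𝓝 (1 : M ≃[L] M)) :
    ∃ A : Finset M, {g : M ≃[L] M | ∀ a ∈ A, g a = a} ⊆ N := by
  letI : TopologicalSpace M := ⊥
  haveI : DiscreteTopology M := ⟨rfl⟩
  rw [nhds_induced (fun (g : M ≃[L] M) => (g : M → M)) 1] at hN
  obtain ⟨t, ht, hsub⟩ := Filter.mem_comap.1 hN
  rw [nhds_pi] at ht
  obtain ⟨I, hI, s, hs, hsub2⟩ := Filter.mem_pi.1 ht
  refine ⟨hI.toFinset, fun g hg => hsub ?_⟩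
  apply hsub2
  intro a ha
  have : g a = a := hg a (hI.mem_toFinset.2 ha)
  have hsa := hs a
  rw [nhds_discrete] at hsa
  simp only [Filter.mem_pure] at hsa
  simpa [this] using hsa

lemma isOpen_agree (σ : M → M) (A : Finset M) :
    IsOpen {g : M ≃[L] M | ∀ a ∈ A, g a = σ a} := by
  letI : TopologicalSpace M := ⊥
  haveI : DiscreteTopology M := ⟨rfl⟩
  have : {g : M ≃[L] M | ∀ a ∈ A, g a = σ a}
      = ⋂ a ∈ A, (fun g : M ≃[L] M => (g : M → M)) ⁻¹' {f | f a = σ a} := by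
    ext g; simp
  rw [this]
  apply isOpen_biInter_finset
  intro a _
  apply IsOpen.preimage
  · exact continuous_induced_dom
  · have : {f : M → M | f a = σ a} = (fun f : M → M => f a) ⁻¹' {σ a} := rfl
    rw [this]
    exact (continuous_apply (A := fun _ : M => M) a).isOpen_preimage _ (isOpen_discrete _)

section Relational
variable [L.IsRelational]

lemma finite_closure {s : Set M} (hs : s.Finite) : Finite ↥(Substructure.closure L s) := by
  have h := Substructure.closure_eq_of_isRelational L s
  have : ((Substructure.closure L s : Set M)) = s := by
    conv_lhs => rw [h]
  rw [show (↥(Substructure.closure L s)) = ↥s from congrArg _ this]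
  exact hs.to_subtype

lemma fg_closure {s : Set M} (hs : s.Finite) : (Substructure.closure L s).FG := by
  haveI := finite_closure (L := L) hs
  exact Substructure.FG.of_finite

omit [L.IsRelational] in
lemma mem_closure_self {s : Set M} {x : M} (hx : x ∈ s) : x ∈ Substructure.closure L s :=
  Substructure.subset_closure hx

end Relational

/-- extension of an embedding of a finite substructure to an automorphism -/
lemma extend_embedding (hhom : L.IsUltrahomogeneous M) {S : L.Substructure M} (hS : S.FG)
    (f : ↥S ↪[L] M) : ∃ g : M ≃[L] M, ∀ x : ↥S, g x = f x := by
  obtain ⟨g, hg⟩ := hhom S hS f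
  exact ⟨g, fun x => (DFunLike.congr_fun hg x).symm⟩

/-- rigidity: between finite substructures of an ordered structure, isomorphisms are unique -/
lemma iso_unique (hord : Ordered L M) {Q R : L.Substructure M} [Finite ↥Q]
    (f g : ↥Q ≃[L] ↥R) : f = g := by
  obtain ⟨r, lin⟩ := hord
  haveI := lin
  set le' : M → M → Prop := fun a b => Structure.RelMap r ![a, b] with hle'
  have key : ∀ {T : L.Substructure M} (a b : ↥T),
      Structure.RelMap (M := ↥T) r ![a, b] ↔ le' (a : M) (b : M) := by
    intro T a b
    have : (fun i => ((![a, b] i : ↥T) : M)) = ![(a : M), (b : M)] := by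
      funext i; fin_cases i <;> rfl
    show Structure.RelMap r (fun i => ((![a, b] i : ↥T) : M)) ↔ _
    rw [this]
  letI pQ : PartialOrder ↥Q := {
    le := fun a b => le' a b
    le_refl := fun a => refl_of le' _
    le_trans := fun a b c => trans_of le'
    le_antisymm := fun a b h1 h2 => Subtype.ext (antisymm_of le' h1 h2) }
  letI : LinearOrder ↥Q := {
    pQ with
    le_total := fun a b => total_of le' _ _
    toDecidableLE := fun a b => Classical.dec _ }
  letI pR : PartialOrder ↥R := {
    le := fun a b => le' a b
    le_refl := fun a => refl_of le' _
    le_trans := fun a b c => trans_of le'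
    le_antisymm := fun a b h1 h2 => Subtype.ext (antisymm_of le' h1 h2) }
  letI : LinearOrder ↥R := {
    pR with
    le_total := fun a b => total_of le' _ _
    toDecidableLE := fun a b => Classical.dec _ }
  have mkiso : ∀ (f : ↥Q ≃[L] ↥R), ∃ o : ↥Q ≃o ↥R, ∀ x, o x = f x := by
    intro f
    refine ⟨⟨f.toEquiv, ?_⟩, fun x => rfl⟩
    intro a b
    show le' (f a : M) (f b : M) ↔ le' (a : M) (b : M)
    rw [← key (f a) (f b), ← key a b]
    have := f.map_rel r ![a, b]
    rw [show (⇑f ∘ ![a, b]) = ![f a, f b] from by funext i; fin_cases i <;> rfl] at this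
    exact this
  obtain ⟨o1, ho1⟩ := mkiso f
  obtain ⟨o2, ho2⟩ := mkiso g
  have : o1 = o2 := Subsingleton.elim _ _
  apply DFunLike.ext
  intro x
  rw [← ho1 x, ← ho2 x, this]

/-- version with an equality of codomains -/
lemma iso_unique' (hord : Ordered L M) {Q R₁ R₂ : L.Substructure M} [Finite ↥Q]
    (h : R₁ = R₂) (f : ↥Q ≃[L] ↥R₁) (g : ↥Q ≃[L] ↥R₂) : ∀ q : ↥Q, (f q : M) = (g q : M) := by
  subst h
  rw [iso_unique hord f g]
  intro q; rfl


section DirA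

variable {L : Language} {M : Type} [L.Structure M]

/-- pulling a substructure contained in `S` back into a substructure of `S` -/
def pullEquiv [L.IsRelational] (S Q : L.Substructure M) (h : (Q : Set M) ⊆ S) :
    ↥Q ≃[L] ↥(Q.comap S.subtype.toHom) where
  toFun q := ⟨⟨q.1, h q.2⟩, by simpa [Substructure.mem_comap] using q.2⟩
  invFun x := ⟨x.1.1, Substructure.mem_comap.1 x.2⟩
  left_inv q := rfl
  right_inv x := rfl
  map_fun' {n} f := isEmptyElim f
  map_rel' {n} r x := Iff.rfl

variable (P : CategoryTheory.Bundled.{0} L.Structure)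

/-- copies of `P` in `M` -/
def Cpy : Type := {Q : L.Substructure M // Nonempty (P ≃[L] ↥Q)}

variable {P}

/-- the image of a copy under an automorphism -/
def mapCpy (g : M ≃[L] M) (Q : Cpy (M := M) P) : Cpy (M := M) P :=
  ⟨Q.1.map g.toEmbedding.toHom,
    ⟨(g.toEmbedding.substructureEquivMap Q.1).comp Q.2.some⟩⟩

lemma mapCpy_coe (g : M ≃[L] M) (Q : Cpy (M := M) P) :
    ((mapCpy g Q).1 : Set M) = ⇑g '' (Q.1 : Set M) := by
  ext x
  simp [mapCpy, Substructure.mem_map]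

lemma mapCpy_one (Q : Cpy (M := M) P) : mapCpy 1 Q = Q := by
  apply Subtype.ext
  apply SetLike.ext'
  rw [mapCpy_coe]
  rw [show ⇑(1 : M ≃[L] M) = id from rfl]
  exact Set.image_id _

lemma mapCpy_mapCpy (g h : M ≃[L] M) (Q : Cpy (M := M) P) :
    mapCpy g (mapCpy h Q) = mapCpy (g * h) Q := by
  apply Subtype.ext
  apply SetLike.ext'
  rw [mapCpy_coe, mapCpy_coe, mapCpy_coe, ← Set.image_comp]
  rfl

lemma finite_cpy (hPfin : Finite ↥P) (Q : Cpy (M := M) P) : Finite ↥Q.1 :=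
  Finite.of_equiv _ Q.2.some.toEquiv

end DirA

section DirAMain

variable {L : Language} {M : Type} [L.Structure M]

theorem dirA (hrel : ∀ i, IsEmpty (L.Functions i)) (hord : Ordered L M)
    (hhom : L.IsUltrahomogeneous M) (hEA : ExtremelyAmenable (M ≃[L] M)) :
    RamseyClass (L.age M) := by
  classical
  haveI : L.IsRelational := hrel
  intro k hk H hH P hP
  by_contra hnot
  push_neg at hnot
  haveI hPfin : Finite ↥P := hP.1.finite
  haveI hHfin : Finite ↥H := hH.1.finite
  letI : TopologicalSpace (Fin k) := ⊥
  haveI : DiscreteTopology (Fin k) := ⟨rfl⟩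
  haveI : Nonempty (Fin k) := ⟨⟨0, hk⟩⟩
  set X := Cpy (M := M) P → Fin k with hXdef
  letI actInst : MulAction (M ≃[L] M) X := {
    smul := fun g χ Q => χ (mapCpy g⁻¹ Q)
    one_smul := fun χ => funext fun Q => by
      show χ (mapCpy (1 : M ≃[L] M)⁻¹ Q) = χ Q
      rw [inv_one, mapCpy_one]
    mul_smul := fun g h χ => funext fun Q => by
      show χ (mapCpy (g * h)⁻¹ Q) = χ (mapCpy h⁻¹ (mapCpy g⁻¹ Q))
      rw [mapCpy_mapCpy, mul_inv_rev] }
  have smul_def : ∀ (g : M ≃[L] M) (χ : X) Q, (g • χ) Q = χ (mapCpy g⁻¹ Q) :=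
    fun _ _ _ => rfl
  -- continuity of the action on X
  have hcont : Continuous (fun p : (M ≃[L] M) × X => p.1 • p.2) := by
    apply continuous_pi
    intro Q
    rw [continuous_iff_continuousAt]
    intro p₀
    set Q₀ := mapCpy p₀.1⁻¹ Q with hQ₀
    haveI hfinQ₀ : Finite ↥(Q₀.1) := finite_cpy hPfin Q₀
    haveI : Finite ↥(Q₀.1 : Set M) := hfinQ₀
    have hsfin : (Q₀.1 : Set M).Finite := Set.toFinite _
    set W₁ := {g : M ≃[L] M | ∀ a ∈ hsfin.toFinset, g a = p₀.1 a} with hW₁def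
    have hW₁o : IsOpen W₁ := isOpen_agree _ _
    have hW₁m : p₀.1 ∈ W₁ := fun a _ => rfl
    have key : ∀ g ∈ W₁, mapCpy g⁻¹ Q = Q₀ := by
      intro g hg
      apply Subtype.ext; apply SetLike.ext'
      rw [mapCpy_coe]
      have h1 : ⇑g '' (Q₀.1 : Set M) = (Q.1 : Set M) := by
        have h2 : ⇑g '' (Q₀.1 : Set M) = ⇑p₀.1 '' (Q₀.1 : Set M) :=
          Set.image_congr fun a ha => hg a (hsfin.mem_toFinset.2 ha)
        rw [h2, hQ₀, mapCpy_coe, ← Set.image_comp]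
        have h3 : ⇑p₀.1 ∘ ⇑(p₀.1⁻¹ : M ≃[L] M) = id := funext fun x => p₀.1.apply_symm_apply x
        rw [h3, Set.image_id]
      rw [← h1, ← Set.image_comp]
      have h4 : ⇑(g⁻¹ : M ≃[L] M) ∘ ⇑g = id := funext fun x => g.symm_apply_apply x
      rw [h4, Set.image_id]
    set W₂ := (fun χ : X => χ Q₀) ⁻¹' {p₀.2 Q₀} with hW₂def
    have hW₂o : IsOpen W₂ := (continuous_apply Q₀).isOpen_preimage _ (isOpen_discrete _)
    have hmem : W₁ ×ˢ W₂ ∈ 𝓝 p₀ := prod_mem_nhds (hW₁o.mem_nhds hW₁m) (hW₂o.mem_nhds rfl)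
    have hev : ∀ᶠ p in 𝓝 p₀, (fun p : (M ≃[L] M) × X => (p.1 • p.2) Q) p
        = (fun p : (M ≃[L] M) × X => (p.1 • p.2) Q) p₀ := by
      refine Filter.eventually_of_mem hmem ?_
      rintro ⟨g, χ⟩ ⟨hg, hχ⟩
      show χ (mapCpy g⁻¹ Q) = p₀.2 (mapCpy p₀.1⁻¹ Q)
      rw [key g hg]
      exact hχ
    exact Filter.Tendsto.congr' (hev.mono fun p hp => hp.symm) tendsto_const_nhds
  -- the space of bad colorings
  set D : (H ↪[L] M) → Set X := fun f => {χ | ∃ Q₁ Q₂ : Cpy (M := M) P,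
      (Q₁.1 : Set M) ⊆ Set.range ⇑f ∧ (Q₂.1 : Set M) ⊆ Set.range ⇑f ∧ χ Q₁ ≠ χ Q₂}
    with hDdef
  have hDclosed : ∀ f, IsClosed (D f) := by
    intro f
    have hrange : (Set.range ⇑f).Finite := Set.finite_range _
    set 𝒮 : Set (Cpy (M := M) P) := {Q | (Q.1 : Set M) ⊆ Set.range ⇑f} with h𝒮def
    have h𝒮 : 𝒮.Finite := by
      have himg : (fun Q : Cpy (M := M) P => (Q.1 : Set M)) '' 𝒮 ⊆ {t | t ⊆ Set.range ⇑f} := by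
        rintro _ ⟨Q, hQ, rfl⟩; exact hQ
      refine Set.Finite.of_finite_image (hrange.finite_subsets.subset himg) ?_
      intro a _ b _ hab
      exact Subtype.ext (SetLike.ext' hab)
    have heq : D f = ⋃ Q₁ ∈ 𝒮, ⋃ Q₂ ∈ 𝒮, {χ : X | χ Q₁ ≠ χ Q₂} := by
      ext χ
      simp only [hDdef, h𝒮def, Set.mem_iUnion, Set.mem_setOf_eq]
      tauto
    rw [heq]
    refine h𝒮.isClosed_biUnion fun Q₁ _ => h𝒮.isClosed_biUnion fun Q₂ _ => ?_
    have : {χ : X | χ Q₁ ≠ χ Q₂} = ({χ : X | χ Q₁ = χ Q₂})ᶜ := by ext; simp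
    rw [this]
    apply IsOpen.isClosed_compl
    have : {χ : X | χ Q₁ = χ Q₂} = ⋃ c : Fin k,
        ((fun χ : X => χ Q₁) ⁻¹' {c}) ∩ ((fun χ : X => χ Q₂) ⁻¹' {c}) := by
      ext χ; simp [eq_comm]
    rw [this]
    exact isOpen_iUnion fun c => ((continuous_apply Q₁).isOpen_preimage _ (isOpen_discrete _)).inter
      ((continuous_apply Q₂).isOpen_preimage _ (isOpen_discrete _))
  set X₀ : Set X := ⋂ f : H ↪[L] M, D f with hX₀def
  have hX₀closed : IsClosed X₀ := isClosed_iInter hDclosed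
  haveI : Nonempty X := ⟨fun _ => ⟨0, hk⟩⟩
  -- X₀ is nonempty by compactness
  have hX₀ne : X₀.Nonempty := by
    rw [Set.nonempty_iff_ne_empty]
    intro hempty
    have h0 : (Set.univ : Set X) ∩ ⋂ f : H ↪[L] M, D f = ∅ := by
      rw [← hX₀def, Set.univ_inter, hempty]
    obtain ⟨u, hu⟩ := IsCompact.elim_finite_subfamily_closed isCompact_univ D hDclosed h0
    have hA : (⋃ f ∈ u, Set.range (⇑f : ↥H → M)).Finite :=
      u.finite_toSet.biUnion fun f _ => Set.finite_range _
    set SA := Substructure.closure L (⋃ f ∈ u, Set.range (⇑f : ↥H → M)) with hSAdef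
    haveI : Finite ↥SA := finite_closure hA
    have hSb : (⟨↥SA, inferInstance⟩ : CategoryTheory.Bundled L.Structure) ∈ L.age M :=
      ⟨Structure.fg_iff_finite.2 inferInstance, ⟨SA.subtype⟩⟩
    obtain ⟨χS, hχS⟩ := hnot ⟨↥SA, inferInstance⟩ hSb
    set χglob : X := fun Q =>
      if h : (Q.1 : Set M) ⊆ (SA : Set M) then
        χS ⟨Q.1.comap SA.subtype.toHom, ⟨(pullEquiv SA Q.1 h).comp Q.2.some⟩⟩
      else ⟨0, hk⟩
      with hχglob
    have hmemD : ∀ f ∈ u, χglob ∈ D f := by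
      intro f hf
      have hfr : Set.range (⇑f : ↥H → M) ⊆ (SA : Set M) := by
        intro a ha
        exact Substructure.subset_closure (Set.mem_biUnion hf ha)
      set ef : H ↪[L] ↥SA := f.codRestrict SA (fun c => hfr (Set.mem_range_self c)) with hefdef
      obtain ⟨Q₁, Q₂, h₁, h₂, hne⟩ := hχS ef
      set lift : {Q : L.Substructure ↥SA // Nonempty (P ≃[L] ↥Q)} → Cpy (M := M) P :=
        fun Q => ⟨Q.1.map SA.subtype.toHom,
          ⟨(SA.subtype.substructureEquivMap Q.1).comp Q.2.some⟩⟩ with hliftdef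
      have hliftsub : ∀ Q : {Q : L.Substructure ↥SA // Nonempty (P ≃[L] ↥Q)},
          ((lift Q).1 : Set M) ⊆ (SA : Set M) := by
        rintro Q _ ⟨q, _, rfl⟩
        exact q.2
      have hlifteq : ∀ Q : {Q : L.Substructure ↥SA // Nonempty (P ≃[L] ↥Q)},
          χglob (lift Q) = χS Q := by
        intro Q
        rw [hχglob]
        simp only [dif_pos (hliftsub Q)]
        refine congrArg χS (Subtype.ext ?_)
        exact Substructure.comap_map_eq_of_injective Subtype.coe_injective Q.1
      have hco : ∀ (Q : {Q : L.Substructure ↥SA // Nonempty (P ≃[L] ↥Q)}),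
          (Q.1 : Set ↥SA) ⊆ Set.range ⇑ef → ((lift Q).1 : Set M) ⊆ Set.range ⇑f := by
        rintro Q hQ _ ⟨q, hq, rfl⟩
        obtain ⟨x, hx⟩ := hQ hq
        exact ⟨x, by rw [← hx]; rfl⟩
      exact ⟨lift Q₁, lift Q₂, hco Q₁ h₁, hco Q₂ h₂, by
        rw [hlifteq Q₁, hlifteq Q₂]; exact hne⟩
    have : χglob ∈ (Set.univ : Set X) ∩ ⋂ f ∈ u, D f :=
      ⟨trivial, Set.mem_biInter fun f hf => hmemD f hf⟩
    rw [hu] at this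
    exact this
  -- X₀ is invariant
  have hinv : ∀ (g : M ≃[L] M) (χ : X), χ ∈ X₀ → g • χ ∈ X₀ := by
    intro g χ hχ
    rw [hX₀def, Set.mem_iInter] at hχ ⊢
    intro f
    obtain ⟨Q₁, Q₂, h₁, h₂, hne⟩ := hχ ((g⁻¹ : M ≃[L] M).toEmbedding.comp f)
    have hsub : ∀ Q : Cpy (M := M) P, (Q.1 : Set M) ⊆
        Set.range ⇑((g⁻¹ : M ≃[L] M).toEmbedding.comp f) →
        ((mapCpy g Q).1 : Set M) ⊆ Set.range ⇑f := by
      intro Q hQ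
      rw [mapCpy_coe]
      rintro _ ⟨a, ha, rfl⟩
      obtain ⟨x, hx⟩ := hQ ha
      refine ⟨x, ?_⟩
      have : a = (g⁻¹ : M ≃[L] M) (f x) := hx.symm
      rw [this, aut_inv_apply]
      exact (g.apply_symm_apply _).symm
    refine ⟨mapCpy g Q₁, mapCpy g Q₂, hsub Q₁ h₁, hsub Q₂ h₂, ?_⟩
    show χ (mapCpy g⁻¹ (mapCpy g Q₁)) ≠ χ (mapCpy g⁻¹ (mapCpy g Q₂))
    rw [mapCpy_mapCpy, inv_mul_cancel, mapCpy_one, mapCpy_mapCpy, inv_mul_cancel, mapCpy_one]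
    exact hne
  -- restrict the action to X₀ and apply extreme amenability
  letI : MulAction (M ≃[L] M) ↥X₀ := {
    smul := fun g x => ⟨g • x.1, hinv g x.1 x.2⟩
    one_smul := fun x => Subtype.ext (one_smul (M ≃[L] M) x.1)
    mul_smul := fun g h x => Subtype.ext (mul_smul g h x.1) }
  haveI : CompactSpace ↥X₀ := isCompact_iff_compactSpace.1 hX₀closed.isCompact
  haveI : Nonempty ↥X₀ := hX₀ne.to_subtype
  have hcont' : Continuous (fun p : (M ≃[L] M) × ↥X₀ => p.1 • p.2) := by
    apply continuous_induced_rng.2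
    show Continuous fun p : (M ≃[L] M) × ↥X₀ => (p.1 • (p.2 : X))
    exact hcont.comp (continuous_id.prodMap continuous_subtype_val)
  obtain ⟨χstar, hfixed⟩ := hEA ↥X₀ hcont'
  have hfix' : ∀ (g : M ≃[L] M) (Q : Cpy (M := M) P),
      (χstar : X) (mapCpy g Q) = (χstar : X) Q := by
    intro g Q
    have h1 : ((g⁻¹ • χstar : ↥X₀) : X) = (χstar : X) :=
      congrArg Subtype.val (hfixed g⁻¹)
    have h2 := congrFun h1 Q
    show (χstar : X) (mapCpy g Q) = _
    rw [← h2]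
    show (χstar : X) (mapCpy g Q) = (χstar : X) (mapCpy (g⁻¹)⁻¹ Q)
    rw [inv_inv]
  -- the fixed coloring is constant on copies
  have hconst : ∀ Q Q' : Cpy (M := M) P, (χstar : X) Q = (χstar : X) Q' := by
    intro Q Q'
    haveI : Finite ↥Q.1 := finite_cpy hPfin Q
    obtain ⟨u⟩ := Q.2
    obtain ⟨u'⟩ := Q'.2
    set w : ↥Q.1 ↪[L] M := Q'.1.subtype.comp (u'.comp u.symm).toEmbedding with hwdef
    obtain ⟨δ, hδ⟩ := extend_embedding hhom Substructure.FG.of_finite w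
    have himg : mapCpy δ Q = Q' := by
      apply Subtype.ext; apply SetLike.ext'
      rw [mapCpy_coe]
      ext x
      constructor
      · rintro ⟨a, ha, rfl⟩
        rw [hδ ⟨a, ha⟩]
        exact ((u'.comp u.symm) ⟨a, ha⟩).2
      · intro hx
        refine ⟨(u (u'.symm ⟨x, hx⟩) : M), (u (u'.symm ⟨x, hx⟩)).2, ?_⟩
        rw [show ((u (u'.symm ⟨x, hx⟩) : M)) = ((⟨(u (u'.symm ⟨x, hx⟩) : M),
          (u (u'.symm ⟨x, hx⟩)).2⟩ : ↥Q.1) : M) from rfl]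
        rw [hδ]
        show ((u'.comp u.symm) (u (u'.symm ⟨x, hx⟩)) : M) = x
        rw [Language.Equiv.comp_apply, u.symm_apply_apply, u'.apply_symm_apply]
    rw [← himg, hfix' δ Q]
  -- contradiction
  obtain ⟨fH⟩ := hH.2
  have hbad := Set.mem_iInter.1 χstar.2 fH
  obtain ⟨Q₁, Q₂, _, _, hne⟩ := hbad
  exact hne (hconst Q₁ Q₂)


end DirAMain


section FixedPoint


theorem fixed_of_covers {G X : Type*} [Group G] [TopologicalSpace X]
    [CompactSpace X] [T2Space X] [Nonempty X] [MulAction G X]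
    (hc : ∀ g : G, Continuous fun x : X => g • x)
    (H : ∀ (F : Finset G) (𝒰 : Finset (Set X)), (∀ U ∈ 𝒰, IsOpen U) → (⋃₀ (𝒰 : Set (Set X)) = univ) →
      ∃ x : X, ∃ U ∈ 𝒰, ∀ g ∈ F, g • x ∈ U) :
    ∃ x : X, ∀ g : G, g • x = x := by
  classical
  let I := {p : Finset G × Finset (Set X) // (∀ U ∈ p.2, IsOpen U) ∧ ⋃₀ (p.2 : Set (Set X)) = univ}
  let A : I → Set X := fun p => {x | ∃ U ∈ p.1.2, ∀ g ∈ p.1.1, g • x ∈ U}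
  let Z : I → Set X := fun p => closure (A p)
  have hIne : Nonempty I := ⟨⟨(∅, {univ}), by simp, by simp⟩⟩
  have hZne : ∀ p, (Z p).Nonempty := by
    intro p
    obtain ⟨x, U, hU, hx⟩ := H p.1.1 p.1.2 p.2.1 p.2.2
    exact ⟨x, subset_closure ⟨U, hU, hx⟩⟩
  have hdir : Directed (· ⊇ ·) Z := by
    intro p q
    refine ⟨⟨(p.1.1 ∪ q.1.1, Finset.image (fun uv : Set X × Set X => uv.1 ∩ uv.2)
      (p.1.2 ×ˢ q.1.2)), ?_, ?_⟩, ?_, ?_⟩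
    · intro U hU
      simp only [Finset.mem_image, Finset.mem_product] at hU
      obtain ⟨⟨u, v⟩, ⟨hu, hv⟩, rfl⟩ := hU
      exact (p.2.1 u hu).inter (q.2.1 v hv)
    · apply eq_univ_of_forall
      intro x
      have hxp : x ∈ ⋃₀ (p.1.2 : Set (Set X)) := by rw [p.2.2]; trivial
      have hxq : x ∈ ⋃₀ (q.1.2 : Set (Set X)) := by rw [q.2.2]; trivial
      obtain ⟨u, hu, hxu⟩ := hxp
      obtain ⟨v, hv, hxv⟩ := hxq
      exact ⟨u ∩ v, by
        simp only [Finset.coe_image, Set.mem_image, Finset.mem_coe, Finset.coe_product]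
        exact ⟨(u, v), by simpa using ⟨hu, hv⟩, rfl⟩, hxu, hxv⟩
    · apply closure_mono
      rintro x ⟨U, hU, hx⟩
      simp only [Finset.mem_image, Finset.mem_product] at hU
      obtain ⟨⟨u, v⟩, ⟨hu, hv⟩, rfl⟩ := hU
      exact ⟨u, hu, fun g hg => ((hx g (Finset.mem_union_left _ hg)).1)⟩
    · apply closure_mono
      rintro x ⟨U, hU, hx⟩
      simp only [Finset.mem_image, Finset.mem_product] at hU
      obtain ⟨⟨u, v⟩, ⟨hu, hv⟩, rfl⟩ := hU
      exact ⟨v, hv, fun g hg => ((hx g (Finset.mem_union_right _ hg)).2)⟩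
  obtain ⟨x₀, hx₀⟩ := IsCompact.nonempty_iInter_of_directed_nonempty_isCompact_isClosed
    Z hdir hZne (fun p => (isClosed_closure).isCompact) (fun p => isClosed_closure)
  refine ⟨x₀, fun g => ?_⟩
  by_contra hne
  obtain ⟨u, v, hu, hv, hgu, hxv, huv⟩ := t2_separation hne
  obtain ⟨C₁, hC₁n, hC₁c, hC₁⟩ := exists_mem_nhds_isClosed_subset (hv.mem_nhds hxv)
  obtain ⟨C₂, hC₂n, hC₂c, hC₂⟩ := exists_mem_nhds_isClosed_subset (hu.mem_nhds hgu)
  have hcov : ⋃₀ (({C₁ᶜ, C₂ᶜ} : Finset (Set X)) : Set (Set X)) = univ := by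
    apply eq_univ_of_forall
    intro x
    by_cases h : x ∈ C₁
    · exact ⟨C₂ᶜ, by simp, fun hx => huv.le_bot ⟨hC₂ hx, hC₁ h⟩⟩
    · exact ⟨C₁ᶜ, by simp, h⟩
  set p : I := ⟨({1, g}, {C₁ᶜ, C₂ᶜ}), by
      intro U hU
      simp only [Finset.mem_insert, Finset.mem_singleton] at hU
      rcases hU with rfl | rfl
      exacts [hC₁c.isOpen_compl, hC₂c.isOpen_compl], hcov⟩
  have hx₀Z : x₀ ∈ Z p := mem_iInter.1 hx₀ p
  have hW : (fun y : X => g • y) ⁻¹' interior C₂ ∈ 𝓝 x₀ :=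
    (hc g).continuousAt.preimage_mem_nhds (isOpen_interior.mem_nhds (mem_interior_iff_mem_nhds.2 hC₂n))
  have hN : ((fun y : X => g • y) ⁻¹' interior C₂) ∩ interior C₁ ∈ 𝓝 x₀ :=
    Filter.inter_mem hW (isOpen_interior.mem_nhds (mem_interior_iff_mem_nhds.2 hC₁n))
  obtain ⟨y, hyN, U, hU, hyU⟩ := mem_closure_iff_nhds.1 hx₀Z _ hN
  have hy1 : y ∈ U := by simpa using hyU 1 (by simp [p])
  have hyg : g • y ∈ U := hyU g (by simp [p])
  have hUmem : U = C₁ᶜ ∨ U = C₂ᶜ := by simpa [p] using hU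
  rcases hUmem with rfl | rfl
  · exact hy1 (interior_subset hyN.2)
  · exact hyg (interior_subset hyN.1)


end FixedPoint

section DirB

open Uniformity UniformSpace SetRel

variable {L : Language} {M : Type*} [L.Structure M]

lemma closure_coe [L.IsRelational] (s : Set M) :
    ((Substructure.closure L s : L.Substructure M) : Set M) = s := by
  ext x
  exact Substructure.mem_closure_iff_of_isRelational L s x

/-- uniform equicontinuity of the action near the identity -/
lemma unif_cont {X : Type*} [UniformSpace X] [CompactSpace X]
    [MulAction (M ≃[L] M) X]
    (hc : Continuous fun p : (M ≃[L] M) × X => p.1 • p.2)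
    {t : Set (X × X)} (ht : t ∈ 𝓤 X) (htsymm : SetRel.IsSymm t) :
    ∃ A : Finset M, ∀ v : M ≃[L] M, (∀ a ∈ A, v a = a) → ∀ y : X, (y, v • y) ∈ t ○ t := by
  classical
  have hmem : ∀ y : X, (fun p : (M ≃[L] M) × X => p.1 • p.2) ⁻¹' ball y t ∈ 𝓝 (1, y) := by
    intro y
    apply hc.continuousAt.preimage_mem_nhds
    rw [show (1 : M ≃[L] M) • y = y from one_smul _ y]
    exact ball_mem_nhds y ht
  have hex : ∀ y : X, ∃ N ∈ 𝓝 (1 : M ≃[L] M), ∃ O ∈ 𝓝 y,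
      N ×ˢ O ⊆ (fun p : (M ≃[L] M) × X => p.1 • p.2) ⁻¹' ball y t := by
    intro y
    exact mem_nhds_prod_iff.1 (hmem y)
  choose N hN O hO hNO using hex
  obtain ⟨tf, htf⟩ := isCompact_univ.elim_nhds_subcover O (fun y _ => hO y)
  have hNN : (⋂ y ∈ tf, N y) ∈ 𝓝 (1 : M ≃[L] M) :=
    (Filter.biInter_finset_mem tf).2 fun y _ => hN y
  obtain ⟨A, hA⟩ := exists_finset_nhds_one hNN
  refine ⟨A, fun v hv y' => ?_⟩
  have hvN : v ∈ ⋂ y ∈ tf, N y := hA hv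
  obtain ⟨c, hct, hy'O⟩ := Set.mem_iUnion₂.1 (htf.2 (Set.mem_univ y'))
  have hvNc : v ∈ N c := (Set.mem_iInter₂.1 hvN) c hct
  have h1 : v • y' ∈ ball c t := hNO c (Set.mk_mem_prod hvNc hy'O)
  have h2 : y' ∈ ball c t := by
    have h2' : (1 : M ≃[L] M) • y' ∈ ball c t :=
      hNO c (Set.mk_mem_prod (mem_of_mem_nhds (hN c)) hy'O)
    rwa [one_smul] at h2'
  exact ⟨c, (by haveI := htsymm; exact SetRel.symm t h2), h1⟩

end DirB

section DirBMain

open Uniformity UniformSpace SetRel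

variable {L : Language} {M : Type} [L.Structure M]

theorem dirB (hrel : ∀ i, IsEmpty (L.Functions i)) (hord : Ordered L M)
    (hhom : L.IsUltrahomogeneous M) (hram : RamseyClass (L.age M)) :
    ExtremelyAmenable (M ≃[L] M) := by
  classical
  haveI : L.IsRelational := hrel
  intro X _ _ _ _ _ hc
  have hc1 : ∀ g : M ≃[L] M, Continuous fun x : X => g • x := fun g =>
    hc.comp (continuous_const.prodMk continuous_id)
  apply fixed_of_covers hc1
  intro F 𝒰 hop hcov
  letI : UniformSpace X := uniformSpaceOfCompactR1
  -- Lebesgue number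
  obtain ⟨E, hE, hleb⟩ := lebesgue_number_lemma_sUnion isCompact_univ
    (fun s hs => hop s hs) (by rw [hcov])
  obtain ⟨s, hs, hssymm, hscomp⟩ := comp_symm_mem_uniformity_sets hE
  obtain ⟨t, ht, htsymm, htcomp⟩ := comp_symm_mem_uniformity_sets hs
  have hts : t ⊆ s := fun p hp => htcomp ⟨p.1, refl_mem_uniformity ht, hp⟩
  have httt : t ○ (t ○ t) ⊆ E := fun p hp => hscomp (SetRel.comp_subset_comp hts htcomp hp)
  -- finite net
  obtain ⟨net, hnet⟩ := isCompact_univ.elim_nhds_subcover (fun x : X => ball x t)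
    (fun x _ => ball_mem_nhds x ht)
  set k := net.card with hkdef
  have x₀ : X := Classical.arbitrary X
  obtain ⟨c₁, hc₁t, _⟩ := Set.mem_iUnion₂.1 (hnet.2 (Set.mem_univ x₀))
  have hk : 1 ≤ k := Finset.card_pos.2 ⟨c₁, hc₁t⟩
  -- uniform continuity
  obtain ⟨A, hA⟩ := unif_cont hc ht htsymm
  -- the structures P and H
  set F' : Finset (M ≃[L] M) := insert 1 F with hF'def
  set PM := Substructure.closure L (↑A : Set M) with hPMdef
  set Bset : Set M := (↑A : Set M) ∪ ⋃ g ∈ F', ⇑(g⁻¹ : M ≃[L] M) '' (↑A : Set M) with hBdef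
  have hBfin : Bset.Finite := (A.finite_toSet).union
    (F'.finite_toSet.biUnion fun g _ => A.finite_toSet.image _)
  set HM := Substructure.closure L Bset with hHMdef
  haveI hPMfin : Finite ↥PM := finite_closure A.finite_toSet
  set Pbs : CategoryTheory.Bundled L.Structure := ⟨↥PM, inferInstance⟩ with hPbsdef
  set Hbs : CategoryTheory.Bundled L.Structure := ⟨↥HM, inferInstance⟩ with hHbsdef
  haveI hHMfin : Finite ↥HM := finite_closure hBfin
  have hPb : Pbs ∈ L.age M :=
    ⟨Structure.fg_iff_finite.2 inferInstance, ⟨PM.subtype⟩⟩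
  have hHb : Hbs ∈ L.age M :=
    ⟨Structure.fg_iff_finite.2 inferInstance, ⟨HM.subtype⟩⟩
  obtain ⟨S, hS, hRam⟩ := hram k hk Hbs hHb Pbs hPb
  obtain ⟨ι⟩ := hS.2
  -- canonical automorphisms attached to copies of PM in M
  have hexists : ∀ cp : Cpy (M := M) Pbs,
      ∃ g : M ≃[L] M, ∀ p : ↥PM, g ↑p = ((cp.2.some p : ↥cp.1) : M) := by
    intro cp
    obtain ⟨g, hg⟩ := extend_embedding hhom Substructure.FG.of_finite
      (cp.1.subtype.comp cp.2.some.toEmbedding)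
    exact ⟨g, fun p => hg p⟩
  choose gc hgc using hexists
  -- centers
  have hcen : ∀ cp : Cpy (M := M) Pbs,
      ∃ c ∈ net, ((gc cp)⁻¹ • x₀) ∈ ball c t := by
    intro cp
    obtain ⟨c, hct, hcb⟩ := Set.mem_iUnion₂.1 (hnet.2 (Set.mem_univ ((gc cp)⁻¹ • x₀)))
    exact ⟨c, hct, hcb⟩
  choose cen hcenmem hcenball using hcen
  set enet := net.equivFin with henet
  -- the coloring of copies in S
  set liftS : {Q : L.Substructure ↥S // Nonempty (Pbs ≃[L] ↥Q)} → Cpy (M := M) Pbs :=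
    fun Q => ⟨Q.1.map ι.toHom, ⟨(ι.substructureEquivMap Q.1).comp Q.2.some⟩⟩ with hliftSdef
  set χ : {Q : L.Substructure ↥S // Nonempty (Pbs ≃[L] ↥Q)} → Fin k :=
    fun Q => enet ⟨cen (liftS Q), hcenmem (liftS Q)⟩ with hχdef
  obtain ⟨e, he⟩ := hRam χ
  -- extend ι ∘ e to an automorphism δ
  obtain ⟨δ, hδ⟩ := extend_embedding hhom Substructure.FG.of_finite (ι.comp e)
  set x := δ⁻¹ • x₀ with hxdef
  -- the embeddings f_g for g ∈ F'
  have hsubH : ∀ g ∈ F', ∀ p : ↥PM, (g⁻¹ : M ≃[L] M) ↑p ∈ HM := by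
    intro g hg p
    have hpA : (↑p : M) ∈ (↑A : Set M) :=
      (Substructure.mem_closure_iff_of_isRelational L _ _).1 p.2
    exact Substructure.subset_closure (Set.mem_union_right _
      (Set.mem_biUnion hg ⟨↑p, hpA, rfl⟩))
  -- main estimate for each g ∈ F'
  have main : ∀ g ∈ F', ∃ SQ : {Q : L.Substructure ↥S // Nonempty (Pbs ≃[L] ↥Q)},
      ((SQ.1 : Set ↥S) ⊆ Set.range ⇑e) ∧
        (g • x) ∈ ball (cen (liftS SQ)) (t ○ (t ○ t)) := by
    intro g hg
    set f0 : ↥PM ↪[L] M := (g⁻¹ : M ≃[L] M).toEmbedding.comp PM.subtype with hf0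
    set f1 : ↥PM ↪[L] ↥HM := f0.codRestrict HM (fun p => hsubH g hg p) with hf1
    set fg : ↥PM ↪[L] ↥S := e.comp f1 with hfgdef
    set SQ : {Q : L.Substructure ↥S // Nonempty (Pbs ≃[L] ↥Q)} :=
      ⟨fg.toHom.range, ⟨fg.equivRange⟩⟩ with hSQ
    refine ⟨SQ, ?_, ?_⟩
    · intro y hy
      obtain ⟨p, hp⟩ := Hom.mem_range.1 hy
      exact ⟨f1 p, hp⟩
    · set cp := liftS SQ with hcp
      set w : ↥PM ↪[L] M := ι.comp fg with hw
      have hwval : ∀ p : ↥PM, w p = δ ((g⁻¹ : M ≃[L] M) ↑p) := by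
        intro p
        have h1 : ((f1 p : ↥HM) : M) = (g⁻¹ : M ≃[L] M) ↑p := rfl
        rw [← h1, hδ (f1 p)]
        rfl
      have hR : w.toHom.range = cp.1 := by
        ext m
        simp only [hcp, hliftSdef, hSQ, Substructure.mem_map, Hom.mem_range,
          Embedding.coe_toHom]
        constructor
        · rintro ⟨p, rfl⟩
          exact ⟨fg p, ⟨p, rfl⟩, rfl⟩
        · rintro ⟨y, ⟨p, rfl⟩, rfl⟩
          exact ⟨p, rfl⟩
      have hkey : ∀ p : ↥PM, δ ((g⁻¹ : M ≃[L] M) ↑p) = gc cp ↑p := by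
        intro p
        have h1 := iso_unique' hord hR w.equivRange cp.2.some p
        rw [Embedding.equivRange_apply] at h1
        calc δ ((g⁻¹ : M ≃[L] M) ↑p) = w p := (hwval p).symm
          _ = ((cp.2.some p : ↥cp.1) : M) := h1
          _ = gc cp ↑p := (hgc cp p).symm
      set v : M ≃[L] M := g * δ⁻¹ * gc cp with hv
      have hvA : ∀ a ∈ A, v a = a := by
        intro a ha
        have hmemPM : a ∈ PM := Substructure.subset_closure ha
        have h2 : gc cp a = δ ((g⁻¹ : M ≃[L] M) a) := (hkey ⟨a, hmemPM⟩).symm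
        show (g * δ⁻¹ * gc cp) a = a
        rw [aut_mul_apply, aut_mul_apply, h2, aut_inv_apply, δ.symm_apply_apply,
          aut_inv_apply, g.apply_symm_apply]
      have h3 := hA v hvA ((gc cp)⁻¹ • x₀)
      have h4 : v • ((gc cp)⁻¹ • x₀) = g • x := by
        rw [hxdef, smul_smul, smul_smul, hv, mul_inv_cancel_right]
      rw [h4] at h3
      exact ⟨(gc cp)⁻¹ • x₀, hcenball cp, h3⟩
  -- assemble
  obtain ⟨SQ1, hsub1, hball1⟩ := main 1 (Finset.mem_insert_self 1 F)
  obtain ⟨U, hU, hUball⟩ := hleb (cen (liftS SQ1)) (Set.mem_univ _)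
  refine ⟨x, U, hU, ?_⟩
  intro g hgF
  obtain ⟨SQg, hsubg, hballg⟩ := main g (Finset.mem_insert_of_mem hgF)
  have hcolor : χ SQ1 = χ SQg := he SQ1 SQg hsub1 hsubg
  have hcen_eq : cen (liftS SQ1) = cen (liftS SQg) := by
    rw [hχdef] at hcolor
    have h7 := enet.injective hcolor
    exact congrArg Subtype.val h7
  apply hUball
  show (cen (liftS SQ1), g • x) ∈ E
  rw [hcen_eq]
  exact httt hballg


end DirBMain


end PaperDef

namespace PaperDef
/-- **Theorem of Kechris, Pestov and Todorcevic.**  A countably infinite ordered homogeneous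
structure with countable relational signature has a Ramsey age if and only if its
automorphism group (with the topology of pointwise convergence) is extremely amenable. -/
theorem ramsey_iff_automorphism_group_extremely_amenable
    (L : Language) (M : Type) [L.Structure M] [Countable M] [Infinite M]
    (hrel : ∀ i, IsEmpty (L.Functions i)) (hcnt : Countable (Σ i, L.Relations i))
    (hord : Ordered L M) (hhom : L.IsUltrahomogeneous M) :
    RamseyClass (L.age M) ↔ ExtremelyAmenable (M ≃[L] M) := by
  constructor
  · exact fun h => dirB hrel hord hhom h
  · exact fun h => dirA hrel hord hhom h

end PaperDef
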